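/- The global maximum of the Gaussian scale space is nonincreasing in scale: if z : ℝⁿ → ℝ is bounded and continuous, then for all scales 0 < s ≤ t, sup_{x ∈ ℝⁿ} (G_t ⋆ z)(x) ≤ sup_{x ∈ ℝⁿ} (G_s ⋆ z)(x), and likewise inf_{x ∈ ℝⁿ} (G_t ⋆ z)(x) ≥ inf_{x ∈ ℝⁿ} (G_s ⋆ z)(x). -/

import Mathlib

open MeasureTheory Real

open scoped RealInnerProductSpace

section Aux

/-- Real version of `integral_cexp_neg_mul_sq_norm_add`. -/
lemma my_integral_rexp_neg_mul_sq_norm_add {V : Type*} [NormedAddCommGroup V]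
    [InnerProductSpace ℝ V] [FiniteDimensional ℝ V] [MeasurableSpace V] [BorelSpace V]
    {b : ℝ} (hb : 0 < b) (c : ℝ) (w : V) :
    ∫ v : V, rexp (-b * ‖v‖ ^ 2 + c * ⟪w, v⟫) =
      (π / b) ^ ((Module.finrank ℝ V : ℝ) / 2) * rexp (c ^ 2 * ‖w‖ ^ 2 / (4 * b)) := by
  have h := GaussianFourier.integral_cexp_neg_mul_sq_norm_add (V := V)
    (b := (b : ℂ)) (by simpa using hb) (c : ℂ) w
  rw [← Complex.ofReal_inj]
  have key : ∀ v : V, Complex.exp (-(b : ℂ) * ‖v‖ ^ 2 + (c : ℂ) * ((⟪w, v⟫ : ℝ) : ℂ)) =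
      (((rexp (-b * ‖v‖ ^ 2 + c * ⟪w, v⟫)) : ℝ) : ℂ) := by
    intro v
    rw [Complex.ofReal_exp]
    push_cast
    ring_nf
  have hL : (∫ v : V, Complex.exp (-(b : ℂ) * ‖v‖ ^ 2 + (c : ℂ) * ((⟪w, v⟫ : ℝ) : ℂ))) =
      ((∫ v : V, rexp (-b * ‖v‖ ^ 2 + c * ⟪w, v⟫) : ℝ) : ℂ) := by
    simp_rw [key]
    exact integral_ofReal
  rw [← hL, h, Complex.ofReal_mul]
  congr 1
  · rw [Complex.ofReal_cpow (by positivity)]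
    push_cast
    ring_nf
  · rw [Complex.ofReal_exp]
    push_cast
    ring_nf
end Aux

/-- The Gaussian kernel at scale `t` on `ℝⁿ`: `G_t(x) = (π t)^(−n/2) · exp(−‖x‖²/t)`. -/
noncomputable def gaussKernel (n : ℕ) (t : ℝ) (x : EuclideanSpace ℝ (Fin n)) : ℝ :=
  (Real.pi * t) ^ (-(n : ℝ) / 2) * Real.exp (-‖x‖ ^ 2 / t)

/-- Gaussian blur of `z` at scale `t`: `(G_t ⋆ z)(x) = ∫ G_t(x − y) z(y) dy`. -/
noncomputable def gaussBlur (n : ℕ) (t : ℝ) (z : EuclideanSpace ℝ (Fin n) → ℝ)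
    (x : EuclideanSpace ℝ (Fin n)) : ℝ :=
  ∫ y, gaussKernel n t (x - y) * z y

section Kernel

variable {n : ℕ} {t : ℝ}

lemma gaussKernel_nonneg (ht : 0 < t) (x : EuclideanSpace ℝ (Fin n)) :
    0 ≤ gaussKernel n t x := by
  unfold gaussKernel
  positivity

lemma continuous_gaussKernel (n : ℕ) (t : ℝ) : Continuous (gaussKernel n t) := by
  unfold gaussKernel
  fun_prop

lemma integrable_gaussKernel (n : ℕ) (ht : 0 < t) : Integrable (gaussKernel n t) := by
  apply Integrable.const_mul
  have h : Integrable (fun v : EuclideanSpace ℝ (Fin n) =>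
      Complex.exp (-((1/t : ℝ) : ℂ) * ‖v‖ ^ 2 + (0 : ℂ) * ((⟪0, v⟫ : ℝ) : ℂ))) :=
    GaussianFourier.integrable_cexp_neg_mul_sq_norm_add (by simp; positivity) 0 0
  have := h.norm
  apply this.congr (Filter.Eventually.of_forall fun v => ?_)
  simp only [Complex.norm_exp]
  congr 1
  have h1 : (-((1/t : ℝ) : ℂ) * ‖v‖ ^ 2 + (0 : ℂ) * ((⟪(0 : EuclideanSpace ℝ (Fin n)), v⟫ : ℝ) : ℂ))
      = ((-‖v‖ ^ 2 / t : ℝ) : ℂ) := by push_cast; ring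
  rw [h1, Complex.ofReal_re]

lemma integral_gaussKernel (n : ℕ) (ht : 0 < t) : ∫ x, gaussKernel n t x = 1 := by
  unfold gaussKernel
  rw [integral_const_mul]
  have : ∀ x : EuclideanSpace ℝ (Fin n), rexp (-‖x‖ ^ 2 / t) = rexp (-(1/t) * ‖x‖ ^ 2) := by
    intro x; congr 1; ring
  simp_rw [this]
  rw [GaussianFourier.integral_rexp_neg_mul_sq_norm (by positivity)]
  have h1 : π / (1 / t) = π * t := by field_simp
  rw [h1, finrank_euclideanSpace, Fintype.card_fin, neg_div,
    Real.rpow_neg (by positivity)]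
  rw [inv_mul_cancel₀ (by positivity)]

/-- Semigroup property: convolution of two Gaussian kernels. -/
lemma gaussKernel_conv (n : ℕ) {a b : ℝ} (ha : 0 < a) (hb : 0 < b)
    (x : EuclideanSpace ℝ (Fin n)) :
    ∫ y, gaussKernel n a (x - y) * gaussKernel n b y = gaussKernel n (a + b) x := by
  have hab : 0 < a + b := by linarith
  have hb' : 0 < (a + b) / (a * b) := by positivity
  have e1 : ∀ A B p q : ℝ, (A * rexp p) * (B * rexp q) = (A * B) * rexp (p + q) := by
    intro A B p q; rw [Real.exp_add]; ring
  have key : ∀ y : EuclideanSpace ℝ (Fin n), gaussKernel n a (x - y) * gaussKernel n b y =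
      ((π * a) ^ (-(n : ℝ) / 2) * (π * b) ^ (-(n : ℝ) / 2) * rexp (-‖x‖ ^ 2 / a)) *
        rexp (-((a + b) / (a * b)) * ‖y‖ ^ 2 + (2 / a) * ⟪x, y⟫) := by
    intro y
    simp only [gaussKernel]
    have e2 : ∀ A B p q : ℝ, (A * B * rexp p) * rexp q = (A * B) * rexp (p + q) := by
      intro A B p q; rw [Real.exp_add]; ring
    rw [e1, e2]
    congr 2
    rw [norm_sub_sq_real]
    field_simp
    ring
  simp_rw [key]
  rw [integral_const_mul, my_integral_rexp_neg_mul_sq_norm_add hb' (2 / a) x,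
    finrank_euclideanSpace, Fintype.card_fin]
  have hc : (π * a) ^ (-(n : ℝ) / 2) * (π * b) ^ (-(n : ℝ) / 2) *
      (π / ((a + b) / (a * b))) ^ ((n : ℝ) / 2) = (π * (a + b)) ^ (-(n : ℝ) / 2) := by
    rw [neg_div, Real.rpow_neg (by positivity), Real.rpow_neg (by positivity),
      Real.rpow_neg (by positivity), ← Real.inv_rpow (by positivity),
      ← Real.inv_rpow (by positivity), ← Real.inv_rpow (by positivity),
      ← Real.mul_rpow (by positivity) (by positivity),
      ← Real.mul_rpow (by positivity) (by positivity)]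
    congr 1
    field_simp
  have he : rexp (-‖x‖ ^ 2 / a) * rexp ((2 / a) ^ 2 * ‖x‖ ^ 2 / (4 * ((a + b) / (a * b)))) =
      rexp (-‖x‖ ^ 2 / (a + b)) := by
    rw [← Real.exp_add]
    congr 1
    field_simp
    ring
  calc (π * a) ^ (-(n : ℝ) / 2) * (π * b) ^ (-(n : ℝ) / 2) * rexp (-‖x‖ ^ 2 / a) *
        ((π / ((a + b) / (a * b))) ^ ((n : ℝ) / 2) *
          rexp ((2 / a) ^ 2 * ‖x‖ ^ 2 / (4 * ((a + b) / (a * b)))))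
      = ((π * a) ^ (-(n : ℝ) / 2) * (π * b) ^ (-(n : ℝ) / 2) *
          (π / ((a + b) / (a * b))) ^ ((n : ℝ) / 2)) *
        (rexp (-‖x‖ ^ 2 / a) *
          rexp ((2 / a) ^ 2 * ‖x‖ ^ 2 / (4 * ((a + b) / (a * b))))) := by ring
    _ = gaussKernel n (a + b) x := by rw [hc, he, gaussKernel]

end Kernel

section Blur

variable {n : ℕ} {z : EuclideanSpace ℝ (Fin n) → ℝ} {C : ℝ}

lemma continuous_gaussKernel_mul {a : ℝ} (hz : Continuous z)
    (x : EuclideanSpace ℝ (Fin n)) :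
    Continuous fun y => gaussKernel n a (x - y) * z y :=
  (((continuous_gaussKernel n a).comp (continuous_const.sub continuous_id)).mul hz)

lemma integrable_gaussKernel_mul {a : ℝ} (ha : 0 < a) (hz : Continuous z)
    (hC : ∀ y, |z y| ≤ C) (x : EuclideanSpace ℝ (Fin n)) :
    Integrable fun y => gaussKernel n a (x - y) * z y := by
  have hK : Integrable fun y : EuclideanSpace ℝ (Fin n) => gaussKernel n a (x - y) :=
    (integrable_gaussKernel n ha).comp_sub_left x
  refine (hK.mul_const C).mono
    (continuous_gaussKernel_mul hz x).aestronglyMeasurable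
    (Filter.Eventually.of_forall fun y => ?_)
  have h0 := gaussKernel_nonneg (n := n) ha (x - y)
  rw [Real.norm_eq_abs, Real.norm_eq_abs, abs_mul, abs_of_nonneg h0, abs_mul,
    abs_of_nonneg h0]
  have hC0 : 0 ≤ C := (abs_nonneg _).trans (hC y)
  rw [abs_of_nonneg hC0]
  exact mul_le_mul_of_nonneg_left (hC y) h0

lemma abs_gaussBlur_le {a : ℝ} (ha : 0 < a) (hz : Continuous z)
    (hC : ∀ y, |z y| ≤ C) (x : EuclideanSpace ℝ (Fin n)) :
    |gaussBlur n a z x| ≤ C := by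
  have h1 := norm_integral_le_integral_norm
    (f := fun y => gaussKernel n a (x - y) * z y) (μ := volume)
  simp only [Real.norm_eq_abs] at h1
  refine h1.trans ?_
  have h2 : Integrable fun y : EuclideanSpace ℝ (Fin n) =>
      |gaussKernel n a (x - y) * z y| := (integrable_gaussKernel_mul ha hz hC x).abs
  have hK : Integrable fun y : EuclideanSpace ℝ (Fin n) => gaussKernel n a (x - y) :=
    (integrable_gaussKernel n ha).comp_sub_left x
  have h3 : (∫ y, gaussKernel n a (x - y) * C) = C := by
    rw [integral_mul_const, integral_sub_left_eq_self (gaussKernel n a) volume x,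
      integral_gaussKernel n ha, one_mul]
  calc (∫ y, |gaussKernel n a (x - y) * z y|) ≤ ∫ y, gaussKernel n a (x - y) * C := by
        refine integral_mono h2 (hK.mul_const C) fun y => ?_
        have h0 := gaussKernel_nonneg (n := n) ha (x - y)
        rw [abs_mul, abs_of_nonneg h0]
        exact mul_le_mul_of_nonneg_left (hC y) h0
    _ = C := h3

lemma gaussBlur_rep {a : ℝ} (x : EuclideanSpace ℝ (Fin n)) :
    gaussBlur n a z x = ∫ u, gaussKernel n a u * z (x - u) := by
  unfold gaussBlur
  rw [← integral_sub_left_eq_self (fun y => gaussKernel n a (x - y) * z y) volume x]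
  congr 1
  funext u
  rw [sub_sub_cancel]

lemma continuous_gaussBlur {a : ℝ} (ha : 0 < a) (hz : Continuous z)
    (hC : ∀ y, |z y| ≤ C) : Continuous (gaussBlur n a z) := by
  have hC0 : 0 ≤ C := (abs_nonneg _).trans (hC 0)
  have : gaussBlur n a z = fun x => ∫ u, gaussKernel n a u * z (x - u) := by
    funext x; exact gaussBlur_rep x
  rw [this]
  apply continuous_of_dominated (bound := fun u => gaussKernel n a u * C)
  · intro x
    exact ((continuous_gaussKernel n a).mul
      (hz.comp (continuous_const.sub continuous_id))).aestronglyMeasurable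
  · intro x
    refine Filter.Eventually.of_forall fun u => ?_
    have h0 := gaussKernel_nonneg (n := n) ha u
    rw [Real.norm_eq_abs, abs_mul, abs_of_nonneg h0]
    exact mul_le_mul_of_nonneg_left (hC _) h0
  · exact (integrable_gaussKernel n ha).mul_const C
  · exact Filter.Eventually.of_forall fun u =>
      continuous_const.mul (hz.comp (continuous_id.sub continuous_const))

/-- Semigroup property for the blur. -/
lemma gaussBlur_add {a b : ℝ} (ha : 0 < a) (hb : 0 < b) (hz : Continuous z)
    (hC : ∀ y, |z y| ≤ C) (x : EuclideanSpace ℝ (Fin n)) :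
    gaussBlur n (a + b) z x = ∫ y, gaussKernel n b y * gaussBlur n a z (x - y) := by
  have hC0 : 0 ≤ C := (abs_nonneg _).trans (hC 0)
  -- integrability of the double integrand
  have hH : Integrable (fun q : EuclideanSpace ℝ (Fin n) × EuclideanSpace ℝ (Fin n) =>
      gaussKernel n a q.1 * gaussKernel n b q.2)
      ((volume : Measure (EuclideanSpace ℝ (Fin n))).prod volume) :=
    (integrable_gaussKernel n ha).mul_prod (integrable_gaussKernel n hb)
  have hφ : MeasurePreserving
      (fun p : EuclideanSpace ℝ (Fin n) × EuclideanSpace ℝ (Fin n) => (x - p.1 - p.2, p.2))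
      ((volume : Measure (EuclideanSpace ℝ (Fin n))).prod volume)
      ((volume : Measure (EuclideanSpace ℝ (Fin n))).prod volume) := by
    have h1 := measurePreserving_add_prod
      (volume : Measure (EuclideanSpace ℝ (Fin n))) (volume : Measure (EuclideanSpace ℝ (Fin n)))
    have h2 := (Measure.measurePreserving_sub_left
      (volume : Measure (EuclideanSpace ℝ (Fin n))) x).prod
      (MeasurePreserving.id (volume : Measure (EuclideanSpace ℝ (Fin n))))
    have h3 := h2.comp h1
    convert h3 using 1
    funext p
    show (x - p.1 - p.2, p.2) = (x - (p.1 + p.2), p.2)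
    rw [sub_add_eq_sub_sub]
  have hg : Integrable (fun p : EuclideanSpace ℝ (Fin n) × EuclideanSpace ℝ (Fin n) =>
      gaussKernel n a (x - p.1 - p.2) * gaussKernel n b p.2 * C)
      ((volume : Measure (EuclideanSpace ℝ (Fin n))).prod volume) := by
    have := (hφ.integrable_comp hH.aestronglyMeasurable).mpr hH
    exact this.mul_const C
  have hF : Integrable (fun p : EuclideanSpace ℝ (Fin n) × EuclideanSpace ℝ (Fin n) =>
      gaussKernel n a (x - p.1 - p.2) * gaussKernel n b p.2 * z p.1)
      ((volume : Measure (EuclideanSpace ℝ (Fin n))).prod volume) := by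
    refine hg.mono ?_ (Filter.Eventually.of_forall fun p => ?_)
    · refine Continuous.aestronglyMeasurable ?_
      exact (((continuous_gaussKernel n a).comp
          ((continuous_const.sub continuous_fst).sub continuous_snd)).mul
        ((continuous_gaussKernel n b).comp continuous_snd)).mul (hz.comp continuous_fst)
    · have h0a := gaussKernel_nonneg (n := n) ha (x - p.1 - p.2)
      have h0b := gaussKernel_nonneg (n := n) hb p.2
      rw [Real.norm_eq_abs, Real.norm_eq_abs, abs_mul, abs_mul, abs_mul, abs_mul,
        abs_of_nonneg h0a, abs_of_nonneg h0b, abs_of_nonneg hC0]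
      exact mul_le_mul_of_nonneg_left (hC p.1) (by positivity)
  have key : ∀ w : EuclideanSpace ℝ (Fin n),
      gaussKernel n (a + b) (x - w) = ∫ y, gaussKernel n a (x - w - y) * gaussKernel n b y := by
    intro w
    rw [gaussKernel_conv n ha hb (x - w)]
  calc gaussBlur n (a + b) z x = ∫ w, gaussKernel n (a + b) (x - w) * z w := rfl
    _ = ∫ w, (∫ y, gaussKernel n a (x - w - y) * gaussKernel n b y) * z w := by
        simp_rw [key]
    _ = ∫ w, ∫ y, gaussKernel n a (x - w - y) * gaussKernel n b y * z w := by
        simp_rw [integral_mul_const]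
    _ = ∫ y, ∫ w, gaussKernel n a (x - w - y) * gaussKernel n b y * z w := by
        apply integral_integral_swap
        exact hF
    _ = ∫ y, gaussKernel n b y * ∫ w, gaussKernel n a ((x - y) - w) * z w := by
        congr 1
        funext y
        rw [← integral_const_mul]
        congr 1
        funext w
        rw [sub_right_comm]
        ring
    _ = ∫ y, gaussKernel n b y * gaussBlur n a z (x - y) := rfl

end Blur

/-- The global maximum of the Gaussian scale space is nonincreasing in scale,
and the global minimum is nondecreasing: for `0 < s ≤ t`,
`sup_x (G_t ⋆ z)(x) ≤ sup_x (G_s ⋆ z)(x)` and `inf_x (G_t ⋆ z)(x) ≥ inf_x (G_s ⋆ z)(x)`. -/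
theorem gaussian_blur_sup_antitone_inf_monotone (n : ℕ)
    (z : EuclideanSpace ℝ (Fin n) → ℝ)
    (hz : Continuous z) (hb : ∃ C : ℝ, ∀ x, |z x| ≤ C)
    (s t : ℝ) (hs : 0 < s) (hst : s ≤ t) :
    (⨆ x, gaussBlur n t z x) ≤ (⨆ x, gaussBlur n s z x) ∧
      (⨅ x, gaussBlur n s z x) ≤ (⨅ x, gaussBlur n t z x) := by
  obtain ⟨C, hC⟩ := hb
  rcases eq_or_lt_of_le hst with rfl | hlt
  · exact ⟨le_rfl, le_rfl⟩
  have hd : 0 < t - s := by linarith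
  have hts : s + (t - s) = t := by ring
  set w := gaussBlur n s z with hw
  have hwC : ∀ y, |w y| ≤ C := fun y => abs_gaussBlur_le hs hz hC y
  have hwcont : Continuous w := continuous_gaussBlur hs hz hC
  have hrep : ∀ x, gaussBlur n t z x = ∫ y, gaussKernel n (t - s) y * w (x - y) := by
    intro x
    conv_lhs => rw [← hts]
    exact gaussBlur_add hs hd hz hC x
  have hbddA : BddAbove (Set.range w) := by
    refine ⟨C, ?_⟩
    rintro _ ⟨y, rfl⟩
    exact (le_abs_self _).trans (hwC y)
  have hbddB : BddBelow (Set.range w) := by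
    refine ⟨-C, ?_⟩
    rintro _ ⟨y, rfl⟩
    exact neg_le_of_abs_le (hwC y)
  have hKint : Integrable (gaussKernel n (t - s)) := integrable_gaussKernel n hd
  have hKone : (∫ y, gaussKernel n (t - s) y) = 1 := integral_gaussKernel n hd
  have hint : ∀ x, Integrable fun y => gaussKernel n (t - s) y * w (x - y) := by
    intro x
    refine (hKint.mul_const C).mono
      (((continuous_gaussKernel n (t - s)).mul
        (hwcont.comp (continuous_const.sub continuous_id))).aestronglyMeasurable)
      (Filter.Eventually.of_forall fun y => ?_)
    have h0 := gaussKernel_nonneg (n := n) hd y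
    have hC0 : 0 ≤ C := (abs_nonneg _).trans (hC 0)
    rw [Real.norm_eq_abs, Real.norm_eq_abs, abs_mul, abs_of_nonneg h0, abs_mul,
      abs_of_nonneg h0, abs_of_nonneg hC0]
    exact mul_le_mul_of_nonneg_left (hwC _) h0
  have core : ∀ x, (⨅ y, w y) ≤ gaussBlur n t z x ∧ gaussBlur n t z x ≤ ⨆ y, w y := by
    intro x
    constructor
    · rw [hrep x]
      have : (∫ y, gaussKernel n (t - s) y * (⨅ y, w y)) = ⨅ y, w y := by
        rw [integral_mul_const, hKone, one_mul]
      rw [← this]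
      refine integral_mono (hKint.mul_const _) (hint x) fun y => ?_
      exact mul_le_mul_of_nonneg_left (ciInf_le hbddB (x - y)) (gaussKernel_nonneg hd y)
    · rw [hrep x]
      have : (∫ y, gaussKernel n (t - s) y * (⨆ y, w y)) = ⨆ y, w y := by
        rw [integral_mul_const, hKone, one_mul]
      rw [← this]
      refine integral_mono (hint x) (hKint.mul_const _) fun y => ?_
      exact mul_le_mul_of_nonneg_left (le_ciSup hbddA (x - y)) (gaussKernel_nonneg hd y)
  constructor
  · exact ciSup_le fun x => (core x).2
  · exact le_ciInf fun x => (core x).1
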